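/- arXiv:2008.08192 — 5 statements merged into one kernel-verified Lean document; each statement's English description precedes it below -/
import Mathlib

section
/- In the weak commutativity group χ(G), for all x, y in G the relation [x, y^φ] = [x^φ, y] holds. -/
open scoped commutatorElement

def chiRels (G : Type*) [Group G] : Subgroup (Monoid.Coprod G G) :=
  Subgroup.normalClosure {x | ∃ g : G, x = ⁅(Monoid.Coprod.inl g : Monoid.Coprod G G), Monoid.Coprod.inr g⁆}

instance (G : Type*) [Group G] : (chiRels G).Normal :=
  Subgroup.normalClosure_normal

def chi (G : Type*) [Group G] := Monoid.Coprod G G ⧸ chiRels G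

instance (G : Type*) [Group G] : Group (chi G) :=
  QuotientGroup.Quotient.group _

/-- The canonical map `G →* χ(G)`. -/
def chiL (G : Type*) [Group G] : G →* chi G :=
  (QuotientGroup.mk' (chiRels G)).comp Monoid.Coprod.inl

/-- The canonical map `G^φ →* χ(G)`, `g ↦ g^φ`. -/
def chiR (G : Type*) [Group G] : G →* chi G :=
  (QuotientGroup.mk' (chiRels G)).comp Monoid.Coprod.inr

/-- `D(G) = [G, G^φ] ≤ χ(G)`. -/
def chiD (G : Type*) [Group G] : Subgroup (chi G) :=
  ⁅(chiL G).range, (chiR G).range⁆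

/-- Key abstract lemma (classic commutator convention, stated as a word identity):
if `p ↔ q`, `b ↔ B` and `p*b ↔ q*B` commute, then `[b⁻¹pb, B] = [B⁻¹qB, b]`. -/
lemma key_chi_lemma {H : Type*} [Group H] (p b q B : H)
    (h1 : Commute p q) (h2 : Commute b B) (h3 : Commute (p * b) (q * B)) :
    (b⁻¹ * p * b)⁻¹ * B⁻¹ * (b⁻¹ * p * b) * B
      = (B⁻¹ * q * B)⁻¹ * b⁻¹ * (B⁻¹ * q * B) * b := by
  have e1 : p⁻¹ * q = q * p⁻¹ := h1.inv_left.eq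
  have e2 : b * B = B * b := h2.eq
  have e2' : b⁻¹ * B = B * b⁻¹ := h2.inv_left.eq
  have e2'' : b * B⁻¹ = B⁻¹ * b := h2.inv_right.eq
  have e2''' : b⁻¹ * B⁻¹ = B⁻¹ * b⁻¹ := (h2.inv_left.inv_right).eq
  have e3 : (p * b) * (q * B) = (q * B) * (p * b) := h3.eq
  have hA : q⁻¹ * b * q = p⁻¹ * B * p * b * B⁻¹ := by
    calc q⁻¹ * b * q = q⁻¹ * (p⁻¹ * ((p * b) * (q * B))) * B⁻¹ := by group
      _ = q⁻¹ * (p⁻¹ * ((q * B) * (p * b))) * B⁻¹ := by rw [e3]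
      _ = (q⁻¹ * (p⁻¹ * q)) * (B * (p * (b * B⁻¹))) := by group
      _ = (q⁻¹ * (q * p⁻¹)) * (B * (p * (b * B⁻¹))) := by rw [e1]
      _ = p⁻¹ * B * p * b * B⁻¹ := by group
  have hC : b * q⁻¹ * b⁻¹ * q = B * p⁻¹ * B⁻¹ * p := by
    calc b * q⁻¹ * b⁻¹ * q = b * (q⁻¹ * b * q)⁻¹ := by group
      _ = b * (p⁻¹ * B * p * b * B⁻¹)⁻¹ := by rw [hA]
      _ = (b * B) * (b⁻¹ * (p⁻¹ * (B⁻¹ * p))) := by group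
      _ = (B * b) * (b⁻¹ * (p⁻¹ * (B⁻¹ * p))) := by rw [e2]
      _ = B * p⁻¹ * B⁻¹ * p := by group
  calc (b⁻¹ * p * b)⁻¹ * B⁻¹ * (b⁻¹ * p * b) * B
      = b⁻¹ * (p⁻¹ * ((b * B⁻¹) * (b⁻¹ * (p * (b * B))))) := by group
    _ = b⁻¹ * (p⁻¹ * ((B⁻¹ * b) * (b⁻¹ * (p * (B * b))))) := by rw [e2'', e2]
    _ = (b⁻¹ * B⁻¹) * ((B * p⁻¹ * B⁻¹ * p) * (B * b)) := by group
    _ = (B⁻¹ * b⁻¹) * ((b * q⁻¹ * b⁻¹ * q) * (B * b)) := by rw [e2''', ← hC]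
    _ = (B⁻¹ * b⁻¹) * ((b * q⁻¹ * b⁻¹ * q) * (b * B)) := by rw [← e2]
    _ = B⁻¹ * (q⁻¹ * ((b⁻¹ * B) * (B⁻¹ * (q * (b * B))))) := by group
    _ = B⁻¹ * (q⁻¹ * ((B * b⁻¹) * (B⁻¹ * (q * (B * b))))) := by rw [e2', e2]
    _ = (B⁻¹ * q * B)⁻¹ * b⁻¹ * (B⁻¹ * q * B) * b := by group

lemma chi_commute {G : Type*} [Group G] (g : G) : Commute (chiL G g) (chiR G g) := by
  have hmem : (⁅(Monoid.Coprod.inl g : Monoid.Coprod G G), Monoid.Coprod.inr g⁆) ∈ chiRels G :=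
    Subgroup.subset_normalClosure ⟨g, rfl⟩
  have h1 : (QuotientGroup.mk' (chiRels G)) ⁅(Monoid.Coprod.inl g : Monoid.Coprod G G), Monoid.Coprod.inr g⁆ = 1 := by
    rw [QuotientGroup.mk'_apply, QuotientGroup.eq_one_iff]
    exact hmem
  rw [map_commutatorElement] at h1
  exact commutatorElement_eq_one_iff_commute.mp h1

/-- In χ(G), [x, y^φ] = [x^φ, y] for all x, y ∈ G. -/
theorem stmt_1 {G : Type*} [Group G] (x y : G) :
    ⁅chiL G x, chiR G y⁆ = ⁅chiR G x, chiL G y⁆ := by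
  have h1 := chi_commute (G := G) (y⁻¹ * x⁻¹ * y)
  have h2 := chi_commute (G := G) y⁻¹
  have h3 : Commute (chiL G (y⁻¹ * x⁻¹ * y) * chiL G y⁻¹)
      (chiR G (y⁻¹ * x⁻¹ * y) * chiR G y⁻¹) := by
    rw [← map_mul, ← map_mul]
    exact chi_commute _
  have hkey := key_chi_lemma (chiL G (y⁻¹ * x⁻¹ * y)) (chiL G y⁻¹)
    (chiR G (y⁻¹ * x⁻¹ * y)) (chiR G y⁻¹) h1 h2 h3
  have hL : (chiL G y⁻¹)⁻¹ * chiL G (y⁻¹ * x⁻¹ * y) * chiL G y⁻¹ = (chiL G x)⁻¹ := by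
    rw [← map_inv, ← map_mul, ← map_mul, ← map_inv]
    congr 1
    group
  have hR : (chiR G y⁻¹)⁻¹ * chiR G (y⁻¹ * x⁻¹ * y) * chiR G y⁻¹ = (chiR G x)⁻¹ := by
    rw [← map_inv, ← map_mul, ← map_mul, ← map_inv]
    congr 1
    group
  have hb : chiL G y⁻¹ = (chiL G y)⁻¹ := map_inv _ _
  have hB : chiR G y⁻¹ = (chiR G y)⁻¹ := map_inv _ _
  rw [hL, hR, hb, hB] at hkey
  simp only [inv_inv] at hkey
  rw [commutatorElement_def, commutatorElement_def]
  exact hkey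
end

section
/- In χ(G), for all x, y, z in G the relation [x, y^φ]^(z^φ) = [x, y^φ]^z holds, i.e., conjugation of [x,y^φ] by z^φ agrees with conjugation by z. -/
open scoped commutatorElement

/-- The defining relations of χ(G): `g` commutes with `g^φ`. -/
lemma chi_comm {G : Type*} [Group G] (g : G) :
    chiL G g * chiR G g = chiR G g * chiL G g := by
  have hmem : ⁅(Monoid.Coprod.inl g : Monoid.Coprod G G), Monoid.Coprod.inr g⁆ ∈ chiRels G :=
    Subgroup.subset_normalClosure ⟨g, rfl⟩
  have h : (QuotientGroup.mk' (chiRels G))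
      ⁅(Monoid.Coprod.inl g : Monoid.Coprod G G), Monoid.Coprod.inr g⁆ = 1 :=
    (QuotientGroup.eq_one_iff _).mpr hmem
  rw [map_commutatorElement] at h
  exact commutatorElement_eq_one_iff_mul_comm.mp h

/-- Abstract algebraic core: if `A` commutes with `A'`, `B` with `B'`, and `A*B`
with `A'*B'`, then `A'⁻¹ B A' B⁻¹ = A⁻¹ B' A B'⁻¹`. -/
lemma chi_alg {H : Type*} [Group H] (A B A' B' : H)
    (h₁ : A * A' = A' * A) (h₂ : B * B' = B' * B)
    (h₃ : (A * B) * (A' * B') = (A' * B') * (A * B)) :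
    A'⁻¹ * B * A' * B⁻¹ = A⁻¹ * B' * A * B'⁻¹ := by
  have c1 : Commute A A' := h₁
  have c2 : Commute B B' := h₂
  have h1' : A' * A⁻¹ = A⁻¹ * A' := c1.inv_left.symm.eq
  have h2' : B'⁻¹ * B = B * B'⁻¹ := c2.inv_right.symm.eq
  have step : A' * (A⁻¹ * B' * A * B'⁻¹) * B = B * A' := by
    calc A' * (A⁻¹ * B' * A * B'⁻¹) * B
        = (A' * A⁻¹) * (B' * A * (B'⁻¹ * B)) := by group
      _ = (A⁻¹ * A') * (B' * A * (B * B'⁻¹)) := by rw [h1', h2']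
      _ = A⁻¹ * ((A' * B') * (A * B)) * B'⁻¹ := by group
      _ = A⁻¹ * ((A * B) * (A' * B')) * B'⁻¹ := by rw [← h₃]
      _ = B * A' := by group
  calc A'⁻¹ * B * A' * B⁻¹
      = A'⁻¹ * (B * A') * B⁻¹ := by group
    _ = A'⁻¹ * (A' * (A⁻¹ * B' * A * B'⁻¹) * B) * B⁻¹ := by rw [step]
    _ = A⁻¹ * B' * A * B'⁻¹ := by group

/-- The key swap relation in χ(G): `⁅a^φ, b⁆ = ⁅a, b^φ⁆`. -/
lemma chi_key {G : Type*} [Group G] (a b : G) :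
    ⁅chiR G a, chiL G b⁆ = ⁅chiL G a, chiR G b⁆ := by
  have h₃ : (chiL G a⁻¹ * chiL G b) * (chiR G a⁻¹ * chiR G b)
      = (chiR G a⁻¹ * chiR G b) * (chiL G a⁻¹ * chiL G b) := by
    rw [← map_mul, ← map_mul]; exact chi_comm (a⁻¹ * b)
  have h := chi_alg (chiL G a⁻¹) (chiL G b) (chiR G a⁻¹) (chiR G b)
    (chi_comm a⁻¹) (chi_comm b) h₃
  simpa [commutatorElement_def, map_inv] using h

/-- In χ(G), conjugation of [x, y^φ] by z^φ agrees with conjugation by z. -/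
theorem stmt_2 {G : Type*} [Group G] (x y z : G) :
    (chiR G z)⁻¹ * ⁅chiL G x, chiR G y⁆ * chiR G z =
      (chiL G z)⁻¹ * ⁅chiL G x, chiR G y⁆ * chiL G z := by
  have id1 : ∀ u v w : chi G,
      v⁻¹ * ⁅u, w⁆ * v = ⁅u, v⁻¹⁆⁻¹ * ⁅u, v⁻¹ * w⁆ := by
    intros; group
  calc (chiR G z)⁻¹ * ⁅chiL G x, chiR G y⁆ * chiR G z
      = ⁅chiL G x, (chiR G z)⁻¹⁆⁻¹ * ⁅chiL G x, (chiR G z)⁻¹ * chiR G y⁆ := id1 _ _ _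
    _ = ⁅chiL G x, chiR G z⁻¹⁆⁻¹ * ⁅chiL G x, chiR G (z⁻¹ * y)⁆ := by
        rw [← map_inv, ← map_mul]
    _ = ⁅chiR G x, chiL G z⁻¹⁆⁻¹ * ⁅chiR G x, chiL G (z⁻¹ * y)⁆ := by
        rw [← chi_key x z⁻¹, ← chi_key x (z⁻¹ * y)]
    _ = ⁅chiR G x, (chiL G z)⁻¹⁆⁻¹ * ⁅chiR G x, (chiL G z)⁻¹ * chiL G y⁆ := by
        rw [map_mul, map_inv]
    _ = (chiL G z)⁻¹ * ⁅chiR G x, chiL G y⁆ * chiL G z := (id1 _ _ _).symm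
    _ = (chiL G z)⁻¹ * ⁅chiL G x, chiR G y⁆ * chiL G z := by rw [chi_key]
end

section
/- In χ(G), for all x, y₁, ..., yₙ in G, the left-normed commutator identity [x^φ, y₁, ..., yₙ, x] = [x, y₁, ..., yₙ, x^φ] holds. -/
open scoped commutatorElement

namespace ChiAux

variable {G K : Type*} [Group G] [Group K]

variable (L R : G →* K)

/-- `t g = (L g)⁻¹ * R g`. -/
def tt (g : G) : K := (L g)⁻¹ * R g

/-- classical-convention commutator -/
def cc (a b : K) : K := a⁻¹ * b⁻¹ * a * b

/-- classical (right) conjugation -/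
def cj (a g : K) : K := g⁻¹ * a * g

lemma tt_def (g : G) : tt L R g = (L g)⁻¹ * R g := rfl

lemma cc_def (a b : K) : cc a b = a⁻¹ * b⁻¹ * a * b := rfl

lemma cj_def (a g : K) : cj a g = g⁻¹ * a * g := rfl

variable {L R}

lemma commute_conj' {a b : K} (g : K) (h : Commute a b) :
    Commute (g * a * g⁻¹) (g * b * g⁻¹) := by
  unfold Commute SemiconjBy
  calc g * a * g⁻¹ * (g * b * g⁻¹) = g * (a * b) * g⁻¹ := by group
    _ = g * (b * a) * g⁻¹ := by rw [h.eq]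
    _ = g * b * g⁻¹ * (g * a * g⁻¹) := by group

lemma core_rel {a b c d : K} (h1 : Commute a c) (h2 : Commute b d)
    (h3 : Commute (a * b) (c * d)) :
    d * a⁻¹ * d⁻¹ * a = b * c⁻¹ * b⁻¹ * c := by
  have hX : b * c⁻¹ * b⁻¹ * c * a⁻¹ * d * a * d⁻¹ = 1 := by
    calc b * c⁻¹ * b⁻¹ * c * a⁻¹ * d * a * d⁻¹
        = b * c⁻¹ * b⁻¹ * (c * a⁻¹) * d * a * d⁻¹ := by group
      _ = b * c⁻¹ * b⁻¹ * (a⁻¹ * c) * d * a * d⁻¹ := by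
          rw [← h1.inv_left.eq]
      _ = b * c⁻¹ * b⁻¹ * a⁻¹ * (c * d * (a * b) * b⁻¹) * d⁻¹ := by group
      _ = b * c⁻¹ * b⁻¹ * a⁻¹ * (a * b * (c * d) * b⁻¹) * d⁻¹ := by rw [← h3.eq]
      _ = b * d * b⁻¹ * d⁻¹ := by group
      _ = d * b * b⁻¹ * d⁻¹ := by rw [h2.eq]
      _ = 1 := by group
  have hX2 : (b * c⁻¹ * b⁻¹ * c) * (d * a⁻¹ * d⁻¹ * a)⁻¹ = 1 := by
    calc (b * c⁻¹ * b⁻¹ * c) * (d * a⁻¹ * d⁻¹ * a)⁻¹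
        = b * c⁻¹ * b⁻¹ * c * a⁻¹ * d * a * d⁻¹ := by group
      _ = 1 := hX
  exact (mul_inv_eq_one.mp hX2).symm

variable (hc : ∀ g, Commute (L g) (R g))

include hc

lemma t_commL (g : G) : Commute (tt L R g) (L g) :=
  Commute.mul_left ((Commute.refl (L g)).inv_left) ((hc g).symm)

lemma t_commR (g : G) : Commute (tt L R g) (R g) :=
  Commute.mul_left ((hc g).inv_left) (Commute.refl (R g))

omit hc

lemma t_mul (u v : G) : tt L R (u * v) = cj (tt L R u) (L v) * tt L R v := by
  simp only [tt_def, cj_def, map_mul]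
  group

include hc

lemma cRel (u v : G) : cc (L u) (R v) = cj (cc (R u) (L v)) (tt L R v) := by
  have h3 : Commute (L u * L v) (R u * R v) := by
    rw [← map_mul, ← map_mul]; exact hc (u * v)
  have T := core_rel (hc u) (hc v) h3
  -- T : R v * (L u)⁻¹ * (R v)⁻¹ * L u = L v * (R u)⁻¹ * (L v)⁻¹ * R u
  simp only [cc_def, cj_def, tt_def]
  calc (L u)⁻¹ * (R v)⁻¹ * L u * R v
      = (R v)⁻¹ * (R v * (L u)⁻¹ * (R v)⁻¹ * L u) * R v := by group
    _ = (R v)⁻¹ * (L v * (R u)⁻¹ * (L v)⁻¹ * R u) * R v := by rw [T]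
    _ = ((L v)⁻¹ * R v)⁻¹ * ((R u)⁻¹ * (L v)⁻¹ * R u * L v) * ((L v)⁻¹ * R v) := by group

lemma cP_shift (a b : G) : cc (R a) (L (a * b)) = cc (R a) (L b) := by
  simp only [cc_def, map_mul]
  calc (R a)⁻¹ * (L a * L b)⁻¹ * R a * (L a * L b)
      = (R a)⁻¹ * (L b)⁻¹ * (L a)⁻¹ * (R a * L a) * L b := by group
    _ = (R a)⁻¹ * (L b)⁻¹ * (L a)⁻¹ * (L a * R a) * L b := by rw [← (hc a).eq]
    _ = (R a)⁻¹ * (L b)⁻¹ * R a * L b := by group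

lemma cQ_shift (a b : G) : cc (L a) (R (a * b)) = cc (L a) (R b) := by
  simp only [cc_def, map_mul]
  calc (L a)⁻¹ * (R a * R b)⁻¹ * L a * (R a * R b)
      = (L a)⁻¹ * (R b)⁻¹ * (R a)⁻¹ * (L a * R a) * R b := by group
    _ = (L a)⁻¹ * (R b)⁻¹ * (R a)⁻¹ * (R a * L a) * R b := by rw [(hc a).eq]
    _ = (L a)⁻¹ * (R b)⁻¹ * L a * R b := by group

lemma cI (a b : G) : Commute (cj (tt L R a) (L b)) (cc (R a) (L b)) := by
  have e1 := cRel hc a b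
  have e2 := cRel hc a (a * b)
  rw [cP_shift hc a b, cQ_shift hc a b] at e2
  have e3 : cj (cc (R a) (L b)) (tt L R b) = cj (cc (R a) (L b)) (tt L R (a * b)) :=
    e1.symm.trans e2
  simp only [cj_def] at e3
  have e4 : Commute (tt L R (a * b) * (tt L R b)⁻¹) (cc (R a) (L b)) := by
    unfold Commute SemiconjBy
    calc tt L R (a * b) * (tt L R b)⁻¹ * cc (R a) (L b)
        = tt L R (a * b) * ((tt L R b)⁻¹ * cc (R a) (L b) * tt L R b) * (tt L R b)⁻¹ := by
          group
      _ = tt L R (a * b) * ((tt L R (a * b))⁻¹ * cc (R a) (L b) * tt L R (a * b)) *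
            (tt L R b)⁻¹ := by rw [e3]
      _ = cc (R a) (L b) * (tt L R (a * b) * (tt L R b)⁻¹) := by group
  have e5 : tt L R (a * b) * (tt L R b)⁻¹ = cj (tt L R a) (L b) := by
    rw [t_mul]; group
  rwa [e5] at e4

lemma cL1' (a b d : G) : Commute (cj (tt L R a) (L b)) (cc (R a) (L d)) := by
  have h := cI hc a (b * d⁻¹)
  have e1 : cj (tt L R a) (L (b * d⁻¹)) = cj (cj (tt L R a) (L b)) (L d⁻¹) := by
    simp only [cj_def, map_mul]; group
  have e2 : cc (R a) (L (b * d⁻¹)) =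
      cc (R a) (L d⁻¹) * cj (cc (R a) (L b)) (L d⁻¹) := by
    simp only [cc_def, cj_def, map_mul]; group
  rw [e1, e2] at h
  have h3 := commute_conj' (L d⁻¹) h
  have e3 : L d⁻¹ * cj (cj (tt L R a) (L b)) (L d⁻¹) * (L d⁻¹)⁻¹ = cj (tt L R a) (L b) := by
    simp only [cj_def]; group
  have e4 : L d⁻¹ * (cc (R a) (L d⁻¹) * cj (cc (R a) (L b)) (L d⁻¹)) * (L d⁻¹)⁻¹ =
      L d⁻¹ * cc (R a) (L d⁻¹) * (L d⁻¹)⁻¹ * cc (R a) (L b) := by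
    simp only [cj_def]; group
  rw [e3, e4] at h3
  have h6 := h3.mul_right (cI hc a b).inv_right
  have e5 : L d⁻¹ * cc (R a) (L d⁻¹) * (L d⁻¹)⁻¹ * cc (R a) (L b) * (cc (R a) (L b))⁻¹ =
      L d⁻¹ * cc (R a) (L d⁻¹) * (L d⁻¹)⁻¹ := by group
  rw [e5] at h6
  have e6 : L d⁻¹ * cc (R a) (L d⁻¹) * (L d⁻¹)⁻¹ = (cc (R a) (L d))⁻¹ := by
    simp only [cc_def, map_inv]; group
  rw [e6] at h6
  have h7 := h6.inv_right
  rwa [inv_inv] at h7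

/-- CORE: any `L`-conjugate of `t x` commutes with `⁅R x, L v⁆`. -/
lemma coreM (x w v : G) : Commute (L w * tt L R x * (L w)⁻¹) ⁅R x, L v⁆ := by
  have h := cL1' hc x⁻¹ (x * w⁻¹) v⁻¹
  have e1 : cj (tt L R x⁻¹) (L (x * w⁻¹)) = (L w * tt L R x * (L w)⁻¹)⁻¹ := by
    simp only [cj_def, tt_def, map_mul, map_inv, inv_inv]; group
  have e2 : cc (R x⁻¹) (L v⁻¹) = ⁅R x, L v⁆ := by
    rw [commutatorElement_def]
    simp only [cc_def, map_inv, inv_inv]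
  rw [e1, e2] at h
  have h2 := h.inv_left
  rwa [inv_inv] at h2

omit hc

/-- The subgroup generated by `L`-conjugates of `t x`. -/
def UU (x : G) : Subgroup K :=
  Subgroup.closure {k : K | ∃ w : G, k = L w * tt L R x * (L w)⁻¹}

lemma mem_U_t (x : G) : tt L R x ∈ UU (L := L) (R := R) x :=
  Subgroup.subset_closure ⟨1, by simp⟩

lemma U_conjL (x : G) (g : G) {s : K} (hs : s ∈ UU (L := L) (R := R) x) :
    L g * s * (L g)⁻¹ ∈ UU (L := L) (R := R) x := by
  induction hs using Subgroup.closure_induction with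
  | mem k hk =>
    obtain ⟨w, rfl⟩ := hk
    refine Subgroup.subset_closure ⟨g * w, ?_⟩
    simp only [map_mul]; group
  | one => simpa using (UU (L := L) (R := R) x).one_mem
  | mul y z _ _ hy hz =>
    have e : L g * (y * z) * (L g)⁻¹ = (L g * y * (L g)⁻¹) * (L g * z * (L g)⁻¹) := by group
    rw [e]; exact mul_mem hy hz
  | inv y _ hy =>
    have e : L g * y⁻¹ * (L g)⁻¹ = (L g * y * (L g)⁻¹)⁻¹ := by group
    rw [e]; exact inv_mem hy

include hc

lemma U_comm_Rx (x : G) {s : K} (hs : s ∈ UU (L := L) (R := R) x) :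
    Commute s (R x) := by
  induction hs using Subgroup.closure_induction with
  | mem k hk =>
    obtain ⟨w, rfl⟩ := hk
    have h1 : Commute (tt L R x) (⁅R x, L w⁻¹⁆) := by
      have := coreM hc x 1 w⁻¹
      simpa using this
    have h2 : Commute (tt L R x) (R x) := t_commR hc x
    have h3 : Commute (tt L R x) (⁅L w⁻¹, R x⁆) := by
      have h := h1.inv_right
      rwa [commutatorElement_inv] at h
    have h4 : Commute (tt L R x) (⁅L w⁻¹, R x⁆ * R x) := h3.mul_right h2
    have e : ⁅L w⁻¹, R x⁆ * R x = (L w)⁻¹ * R x * L w := by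
      rw [commutatorElement_def]; simp only [map_inv]; group
    rw [e] at h4
    have h6 := commute_conj' (L w) h4
    have e2 : L w * ((L w)⁻¹ * R x * L w) * (L w)⁻¹ = R x := by group
    rwa [e2] at h6
  | one => exact Commute.one_left _
  | mul y z _ _ hy hz => exact hy.mul_left hz
  | inv y _ hy => exact hy.inv_left

lemma U_comm_commutator (x v : G) {s : K} (hs : s ∈ UU (L := L) (R := R) x) :
    Commute s ⁅R x, L v⁆ := by
  induction hs using Subgroup.closure_induction with
  | mem k hk =>
    obtain ⟨w, rfl⟩ := hk
    exact coreM hc x w v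
  | one => exact Commute.one_left _
  | mul y z _ _ hy hz => exact hy.mul_left hz
  | inv y _ hy => exact hy.inv_left

omit hc

lemma step_comm (x : G) {d : K} (hd : ∀ s ∈ UU (L := L) (R := R) x, Commute s d)
    (v : G) : ∀ s ∈ UU (L := L) (R := R) x, Commute s ⁅d, L v⁆ := by
  intro s hs
  have h1 : Commute s d := hd s hs
  have hs' : L v⁻¹ * s * (L v⁻¹)⁻¹ ∈ UU (L := L) (R := R) x := U_conjL x v⁻¹ hs
  rw [map_inv] at hs'
  have h2 : Commute ((L v)⁻¹ * s * ((L v)⁻¹)⁻¹) d⁻¹ := (hd _ hs').inv_right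
  have h3 := commute_conj' (L v) h2
  have e : L v * ((L v)⁻¹ * s * ((L v)⁻¹)⁻¹) * (L v)⁻¹ = s := by group
  rw [e] at h3
  have h4 : Commute s (d * (L v * d⁻¹ * (L v)⁻¹)) := h1.mul_right h3
  have e2 : d * (L v * d⁻¹ * (L v)⁻¹) = ⁅d, L v⁆ := by
    rw [commutatorElement_def]; group
  rwa [e2] at h4

lemma chain_comm (x : G) (ys : List G) :
    ∀ (d : K), (∀ s ∈ UU (L := L) (R := R) x, Commute s d) →
      ∀ s ∈ UU (L := L) (R := R) x, Commute s (ys.foldl (fun a b => ⁅a, L b⁆) d) := by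
  induction ys with
  | nil => intro d hd; exact hd
  | cons v ys ih =>
    intro d hd
    rw [List.foldl_cons]
    exact ih _ (step_comm x hd v)

lemma chainshift (x : G) (ys : List G) :
    ∀ (d σ : K), (∀ s ∈ UU (L := L) (R := R) x, Commute s d) →
      σ ∈ UU (L := L) (R := R) x →
      ∃ σ' ∈ UU (L := L) (R := R) x,
        ys.foldl (fun a b => ⁅a, L b⁆) (d * σ) = ys.foldl (fun a b => ⁅a, L b⁆) d * σ' := by
  induction ys with
  | nil => exact fun d σ _ hσ => ⟨σ, hσ, rfl⟩
  | cons v ys ih =>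
    intro d σ hd hσ
    have hσv : ⁅σ, L v⁆ ∈ UU (L := L) (R := R) x := by
      have e : ⁅σ, L v⁆ = σ * (L v * σ⁻¹ * (L v)⁻¹) := by
        rw [commutatorElement_def]; group
      rw [e]
      exact mul_mem hσ (U_conjL x v (inv_mem hσ))
    have c1 : Commute ⁅σ, L v⁆ d := hd _ hσv
    have c2 : Commute ⁅σ, L v⁆ ⁅d, L v⁆ := step_comm x hd v _ hσv
    have heq : ⁅d * σ, L v⁆ = ⁅d, L v⁆ * ⁅σ, L v⁆ := by
      calc ⁅d * σ, L v⁆ = d * ⁅σ, L v⁆ * d⁻¹ * ⁅d, L v⁆ := by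
            simp only [commutatorElement_def]; group
        _ = ⁅σ, L v⁆ * d * d⁻¹ * ⁅d, L v⁆ := by rw [← c1.eq]
        _ = ⁅σ, L v⁆ * ⁅d, L v⁆ := by group
        _ = ⁅d, L v⁆ * ⁅σ, L v⁆ := c2.eq
    rw [List.foldl_cons, List.foldl_cons, heq]
    exact ih _ _ (step_comm x hd v) hσv

include hc

theorem main_abstract (x : G) (ys : List G) :
    ⁅ys.foldl (fun a b => ⁅a, L b⁆) (R x), L x⁆ =
      ⁅ys.foldl (fun a b => ⁅a, L b⁆) (L x), R x⁆ := by
  cases ys with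
  | nil =>
    simp only [List.foldl_nil]
    rw [commutatorElement_eq_one_iff_commute.mpr (hc x).symm,
      commutatorElement_eq_one_iff_commute.mpr (hc x)]
  | cons y ys =>
    simp only [List.foldl_cons]
    set q : K := (tt L R x)⁻¹ * (L y * tt L R x * (L y)⁻¹) with hq_def
    have hqU : q ∈ UU (L := L) (R := R) x :=
      mul_mem (inv_mem (mem_U_t x)) (U_conjL x y (mem_U_t x))
    have hd : ∀ s ∈ UU (L := L) (R := R) x, Commute s ⁅R x, L y⁆ :=
      fun s hs => U_comm_commutator hc x y hs
    have keyLR : ⁅L x, L y⁆ = ⁅R x, L y⁆ * q := by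
      have e1 : ⁅L x, L y⁆ = R x * q * (R x)⁻¹ * ⁅R x, L y⁆ := by
        simp only [commutatorElement_def, hq_def, tt_def]; group
      have hcq : R x * q = q * R x := (U_comm_Rx hc x hqU).symm.eq
      have e2 : R x * q * (R x)⁻¹ = q := by
        calc R x * q * (R x)⁻¹ = q * R x * (R x)⁻¹ := by rw [hcq]
          _ = q := by group
      rw [e1, e2]
      exact (hd q hqU).eq
    obtain ⟨σ', hσ'U, hfold⟩ := chainshift x ys ⁅R x, L y⁆ q hd hqU
    rw [keyLR, hfold]
    set c := ys.foldl (fun a b => ⁅a, L b⁆) ⁅R x, L y⁆ with hc_def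
    have hcc : ∀ s ∈ UU (L := L) (R := R) x, Commute s c := chain_comm x ys _ hd
    have eR : ⁅c * σ', R x⁆ = ⁅c, R x⁆ := by
      have e : ⁅c * σ', R x⁆ = c * ⁅σ', R x⁆ * c⁻¹ * ⁅c, R x⁆ := by
        simp only [commutatorElement_def]; group
      rw [e, commutatorElement_eq_one_iff_commute.mpr (U_comm_Rx hc x hσ'U)]
      group
    have eL : ⁅c, L x⁆ = ⁅c, R x⁆ := by
      have hct : Commute (tt L R x) c := hcc _ (mem_U_t x)
      have e0 : L x = R x * (tt L R x)⁻¹ := by rw [tt_def]; group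
      have e1 : (tt L R x)⁻¹ * c⁻¹ * tt L R x = c⁻¹ := by
        rw [hct.inv_left.inv_right.eq]; group
      calc ⁅c, L x⁆ = c * (R x * (tt L R x)⁻¹) * c⁻¹ * (tt L R x * (R x)⁻¹) := by
            rw [commutatorElement_def, e0]; group
        _ = c * R x * ((tt L R x)⁻¹ * c⁻¹ * tt L R x) * (R x)⁻¹ := by group
        _ = c * R x * c⁻¹ * (R x)⁻¹ := by rw [e1]
        _ = ⁅c, R x⁆ := by rw [commutatorElement_def]
    rw [eR, eL]

end ChiAux

/-- In χ(G), the left-normed commutator identity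
[x^φ, y₁, …, yₙ, x] = [x, y₁, …, yₙ, x^φ] holds. -/
theorem stmt_3 {G : Type*} [Group G] (x : G) (ys : List G) :
    ⁅ys.foldl (fun a b => ⁅a, chiL G b⁆) (chiR G x), chiL G x⁆ =
      ⁅ys.foldl (fun a b => ⁅a, chiL G b⁆) (chiL G x), chiR G x⁆ := by
  have hc : ∀ g : G, Commute (chiL G g) (chiR G g) := by
    intro g
    have h1 : (⁅Monoid.Coprod.inl g, Monoid.Coprod.inr g⁆ : Monoid.Coprod G G) ∈ chiRels G :=
      Subgroup.subset_normalClosure ⟨g, rfl⟩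
    have h2 : ⁅chiL G g, chiR G g⁆ = 1 := by
      calc ⁅chiL G g, chiR G g⁆
          = id (α := chi G) (QuotientGroup.mk' (chiRels G) ⁅Monoid.Coprod.inl g, Monoid.Coprod.inr g⁆) := by
            rw [map_commutatorElement]; rfl
        _ = 1 := (QuotientGroup.eq_one_iff _).mpr h1
    exact commutatorElement_eq_one_iff_commute.mp h2
  exact ChiAux.main_abstract hc x ys
end

section
/- If A is an abelian normal subgroup of a finite group G and exp(A) is even, then the exponent of the subgroup [A, G^φ] of χ(G) divides 2·exp(A). -/
open scoped commutatorElement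

namespace Chi9
variable {G : Type*} [Group G]

/-- relator: the two copies of `g` commute. -/
lemma rel (g : G) : Commute (chiL G g) (chiR G g) := by
  rw [← commutatorElement_eq_one_iff_commute]
  have h : (⁅(Monoid.Coprod.inl g : Monoid.Coprod G G), Monoid.Coprod.inr g⁆) ∈ chiRels G :=
    Subgroup.subset_normalClosure ⟨g, rfl⟩
  have h2 : (QuotientGroup.mk' (chiRels G)) ⁅(Monoid.Coprod.inl g : Monoid.Coprod G G), Monoid.Coprod.inr g⁆ = 1 := by
    rwa [← QuotientGroup.ker_mk' (chiRels G), MonoidHom.mem_ker] at h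
  rw [map_commutatorElement] at h2
  exact h2

/-- conjugation -/
def cj (u x : chi G) : chi G := u * x * u⁻¹

lemma cj_mul (u x y : chi G) : cj u (x * y) = cj u x * cj u y := by simp only [cj]; group
lemma cj_inv (u x : chi G) : cj u x⁻¹ = (cj u x)⁻¹ := by simp only [cj]; group
lemma cj_cj (u v x : chi G) : cj u (cj v x) = cj (u * v) x := by simp only [cj]; group
lemma cj_one (x : chi G) : cj 1 x = x := by simp only [cj]; group
lemma cj_id (u : chi G) : cj u 1 = 1 := by simp only [cj]; group
lemma cj_comm (u a b : chi G) : cj u ⁅a, b⁆ = ⁅cj u a, cj u b⁆ := by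
  simp only [cj, commutatorElement_def]; group
lemma cj_pow (u x : chi G) (n : ℕ) : cj u (x ^ n) = (cj u x) ^ n := by
  induction n with
  | zero => simp [cj_id]
  | succ n ih => rw [pow_succ, cj_mul, ih, pow_succ]

lemma cj_eq_self_of_commute {u x : chi G} (h : Commute u x) : cj u x = x := by
  simp only [cj]; rw [h.eq]; group

lemma commute_of_cj_eq_self {u x : chi G} (h : cj u x = x) : Commute u x := by
  have : u * x = x * u := by
    conv_rhs => rw [← h]
    simp only [cj]; group
  exact this

/-- `C x y = ⁅x, y^φ⁆` -/
def CC (x y : G) : chi G := ⁅chiL G x, chiR G y⁆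

/-- `δ u = (u)⁻¹ * u^φ` -/
def dd (u : G) : chi G := (chiL G u)⁻¹ * chiR G u

lemma CCexp1 (x y z : G) : CC (x * y) z = cj (chiL G x) (CC y z) * CC x z := by
  simp only [CC, cj, map_mul, commutatorElement_def]; group

lemma CCexp2 (x y z : G) : CC x (y * z) = CC x y * cj (chiR G y) (CC x z) := by
  simp only [CC, cj, map_mul, commutatorElement_def]; group

lemma CC_self (x : G) : CC x x = 1 :=
  commutatorElement_eq_one_iff_commute.mpr (rel x)

lemma CC_one_right (x : G) : CC x 1 = 1 := by simp [CC]
lemma CC_one_left (y : G) : CC 1 y = 1 := by simp [CC]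

/-- key expansion of the relator on a product -/
lemma R0 (u v : G) : cj (chiL G u) (CC v u) * cj (chiR G u) (CC u v) = 1 := by
  have h : ⁅chiL G u * chiL G v, chiR G u * chiR G v⁆ = 1 := by
    rw [← map_mul, ← map_mul]
    exact commutatorElement_eq_one_iff_commute.mpr (rel (u * v))
  have e1 : ⁅chiL G u * chiL G v, chiR G u * chiR G v⁆
      = ⁅chiL G u * chiL G v, chiR G u⁆ *
        cj (chiR G u) ⁅chiL G u * chiL G v, chiR G v⁆ := by
    simp only [cj, commutatorElement_def]; group
  have e2 : ⁅chiL G u * chiL G v, chiR G u⁆ = cj (chiL G u) ⁅chiL G v, chiR G u⁆ * ⁅chiL G u, chiR G u⁆ := by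
    simp only [cj, commutatorElement_def]; group
  have e3 : ⁅chiL G u * chiL G v, chiR G v⁆ = cj (chiL G u) ⁅chiL G v, chiR G v⁆ * ⁅chiL G u, chiR G v⁆ := by
    simp only [cj, commutatorElement_def]; group
  rw [e1, e2, e3, commutatorElement_eq_one_iff_commute.mpr (rel u),
    commutatorElement_eq_one_iff_commute.mpr (rel v)] at h
  simpa [CC, cj_mul, cj_id] using h

lemma R1 (u v : G) : cj (dd u) (CC u v) = (CC v u)⁻¹ := by
  have h2 : cj (chiR G u) (CC u v) = (cj (chiL G u) (CC v u))⁻¹ :=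
    eq_inv_of_mul_eq_one_right (R0 u v)
  calc cj (dd u) (CC u v) = cj ((chiL G u)⁻¹) (cj (chiR G u) (CC u v)) := by
        rw [cj_cj]; rfl
    _ = (cj ((chiL G u)⁻¹) (cj (chiL G u) (CC v u)))⁻¹ := by rw [h2, cj_inv]
    _ = (CC v u)⁻¹ := by rw [cj_cj, inv_mul_cancel, cj_one]


lemma T3 (u v w : G) :
    cj (dd u * chiR G v) (CC u w) = cj (chiL G v * dd u) (CC u w) := by
  have hL : cj (dd u) (CC u (v * w))
      = (CC v u)⁻¹ * cj (dd u * chiR G v) (CC u w) := by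
    rw [CCexp2, cj_mul, R1, ← cj_cj]
  have hR : cj (dd u) (CC u (v * w))
      = (CC v u)⁻¹ * cj (chiL G v * dd u) (CC u w) := by
    rw [R1, CCexp1, mul_inv_rev, ← cj_inv, ← R1 u w, cj_cj]
  have := hL.symm.trans hR
  exact mul_left_cancel this

lemma ddC (u w : G) : Commute (dd u) (CC u w) := by
  have h := T3 u u w
  have h1 : chiL G u * dd u = chiR G u := by
    simp only [dd]; group
  have h2 : dd u * chiR G u = chiR G u * dd u :=
    (((rel u).inv_left).mul_left (Commute.refl (chiR G u))).eq
  rw [h1, h2, ← cj_cj] at h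
  have h4 := congrArg (cj ((chiR G u)⁻¹)) h
  simp only [cj_cj] at h4
  rw [inv_mul_cancel_left, inv_mul_cancel, cj_one] at h4
  exact commute_of_cj_eq_self h4

lemma flip (x y : G) : CC x y = (CC y x)⁻¹ := by
  rw [← R1 x y, cj_eq_self_of_commute (ddC x y)]

lemma DL (u v w : G) : Commute (CC v w) (dd u) := by
  have key : cj (chiL G u) (CC v w) = cj (chiR G u) (CC v w) := by
    have h1 : CC (u * v) w = (CC w (u * v))⁻¹ := flip _ _
    rw [CCexp1, CCexp2, mul_inv_rev, ← cj_inv, ← flip, ← flip] at h1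
    exact mul_right_cancel h1
  -- from l-conj = r-conj deduce commutation with dd u
  have h2 : CC v w * dd u = dd u * CC v w := by
    have h3 : chiL G u * CC v w * (chiL G u)⁻¹ = chiR G u * CC v w * (chiR G u)⁻¹ := key
    simp only [dd]
    calc CC v w * ((chiL G u)⁻¹ * chiR G u)
        = (chiL G u)⁻¹ * (chiL G u * CC v w * (chiL G u)⁻¹) * chiR G u := by group
      _ = (chiL G u)⁻¹ * (chiR G u * CC v w * (chiR G u)⁻¹) * chiR G u := by rw [h3]
      _ = (chiL G u)⁻¹ * chiR G u * CC v w := by group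
  exact h2

/-- transport: conjugation by `l u` and `r u` agree on elements commuting with `dd u` -/
lemma transport {x : chi G} (u : G) (h : Commute x (dd u)) :
    cj (chiL G u) x = cj (chiR G u) x := by
  have h2 := h.eq
  simp only [dd] at h2
  simp only [cj]
  calc chiL G u * x * (chiL G u)⁻¹
      = chiL G u * (x * ((chiL G u)⁻¹ * chiR G u)) * (chiR G u)⁻¹ := by group
    _ = chiL G u * ((chiL G u)⁻¹ * chiR G u * x) * (chiR G u)⁻¹ := by rw [h2]
    _ = chiR G u * x * (chiR G u)⁻¹ := by group

/-- commutator expansion identities -/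
lemma comm_mul_left (a b c : chi G) : ⁅a * b, c⁆ = cj a ⁅b, c⁆ * ⁅a, c⁆ := by
  simp only [cj, commutatorElement_def]; group

lemma comm_mul_right (a b c : chi G) : ⁅a, b * c⁆ = ⁅a, b⁆ * cj b ⁅a, c⁆ := by
  simp only [cj, commutatorElement_def]; group

lemma comm_as_cj (a b : chi G) : ⁅a, b⁆ = cj a b * b⁻¹ := by
  simp only [cj, commutatorElement_def]

/-- the subgroup D = [G, G^φ] -/
def DD (G : Type*) [Group G] : Subgroup (chi G) :=
  Subgroup.closure {z : chi G | ∃ x y : G, z = CC x y}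

lemma memD_CC (x y : G) : CC x y ∈ DD G := Subgroup.subset_closure ⟨x, y, rfl⟩

lemma commute_dd_of_memD {d : chi G} (hd : d ∈ DD G) (u : G) : Commute d (dd u) := by
  induction hd using Subgroup.closure_induction with
  | mem z hz => obtain ⟨x, y, rfl⟩ := hz; exact DL u x y
  | one => exact Commute.one_left _
  | mul x y hx hy ihx ihy => exact ihx.mul_left ihy
  | inv x hx ihx => exact ihx.inv_left

/-- induction over χ(G) by generators -/
lemma chi_ind {P : chi G → Prop} (hl : ∀ g, P (chiL G g)) (hr : ∀ g, P (chiR G g))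
    (hmul : ∀ x y, P x → P y → P (x * y)) (x : chi G) : P x := by
  obtain ⟨w, rfl⟩ := QuotientGroup.mk'_surjective (chiRels G) x
  induction w using Monoid.Coprod.induction_on with
  | inl m => exact hl m
  | inr n => exact hr n
  | mul x y hx hy => rw [map_mul]; exact hmul _ _ hx hy

lemma cjL_CC (z x y : G) : cj (chiL G z) (CC x y) = CC (z * x) y * (CC z y)⁻¹ := by
  rw [CCexp1]; group

lemma cjR_CC (z x y : G) : cj (chiR G z) (CC x y) = (CC x z)⁻¹ * CC x (z * y) := by
  rw [CCexp2]; group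

lemma memD_cj (u : chi G) : ∀ d ∈ DD G, cj u d ∈ DD G := by
  induction u using chi_ind with
  | hl g =>
    intro d hd
    induction hd using Subgroup.closure_induction with
    | mem z hz =>
      obtain ⟨x, y, rfl⟩ := hz
      rw [cjL_CC]; exact mul_mem (memD_CC _ _) (inv_mem (memD_CC _ _))
    | one => rw [cj_id]; exact one_mem _
    | mul x y hx hy ihx ihy => rw [cj_mul]; exact mul_mem ihx ihy
    | inv x hx ihx => rw [cj_inv]; exact inv_mem ihx
  | hr g =>
    intro d hd
    induction hd using Subgroup.closure_induction with
    | mem z hz =>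
      obtain ⟨x, y, rfl⟩ := hz
      rw [cjR_CC]; exact mul_mem (inv_mem (memD_CC _ _)) (memD_CC _ _)
    | one => rw [cj_id]; exact one_mem _
    | mul x y hx hy ihx ihy => rw [cj_mul]; exact mul_mem ihx ihy
    | inv x hx ihx => rw [cj_inv]; exact inv_mem ihx
  | hmul x y hx hy =>
    intro d hd
    rw [← cj_cj]; exact hx _ (hy _ hd)

instance DD_normal : (DD G).Normal :=
  ⟨fun n hn g => by simpa [cj] using memD_cj g n hn⟩

/-- K = centralizer of D -/
def KK (G : Type*) [Group G] : Subgroup (chi G) :=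
  Subgroup.centralizer (DD G : Set (chi G))

lemma commK {κ d : chi G} (hκ : κ ∈ KK G) (hd : d ∈ DD G) : Commute κ d :=
  (Subgroup.mem_centralizer_iff.mp hκ d hd).symm

lemma memK_cj (u : chi G) {κ : chi G} (hκ : κ ∈ KK G) : cj u κ ∈ KK G := by
  rw [KK, Subgroup.mem_centralizer_iff]
  intro d hd
  have hd' : u⁻¹ * d * u ∈ DD G := by simpa [cj] using memD_cj u⁻¹ d hd
  have h := (commK hκ hd').eq
  simp only [cj]
  calc d * (u * κ * u⁻¹) = u * ((u⁻¹ * d * u) * κ) * u⁻¹ := by group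
    _ = u * (κ * (u⁻¹ * d * u)) * u⁻¹ := by rw [← h]
    _ = u * κ * u⁻¹ * d := by group

lemma dd_mem_K (u : G) : dd u ∈ KK G := by
  rw [KK, Subgroup.mem_centralizer_iff]
  intro d hd
  exact (commute_dd_of_memD hd u).eq

/-- the K-part of C(x,y) -/
def kap (x y : G) : chi G := cj (chiL G y) ⁅chiL G x, dd y⁆

lemma kap_mem (x y : G) : kap x y ∈ KK G := by
  have h1 : ⁅chiL G x, dd y⁆ = cj (chiL G x) (dd y) * (dd y)⁻¹ := comm_as_cj _ _
  rw [kap, h1]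
  exact memK_cj _ (mul_mem (memK_cj _ (dd_mem_K y)) (inv_mem (dd_mem_K y)))

lemma CC_decomp (x y : G) : CC x y = chiL G ⁅x, y⁆ * kap x y := by
  have h : chiR G y = chiL G y * dd y := by simp only [dd]; group
  rw [CC, h, map_commutatorElement]
  simp only [kap, cj, commutatorElement_def, dd]; group

section Tpart
variable (A : Subgroup G)

lemma T_le_D : ⁅A.map (chiL G), (chiR G).range⁆ ≤ DD G := by
  refine Subgroup.commutator_le.mpr ?_
  intro g₁ h₁ g₂ h₂
  obtain ⟨a, _, rfl⟩ := Subgroup.mem_map.mp h₁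
  obtain ⟨g, rfl⟩ := h₂
  exact memD_CC a g

variable {A}

lemma Tstruct (hA : A.Normal) :
    ∀ t ∈ ⁅A.map (chiL G), (chiR G).range⁆, ∃ k ∈ A, ∃ κ ∈ KK G, t = chiL G k * κ := by
  intro t ht
  rw [Subgroup.commutator_def] at ht
  induction ht using Subgroup.closure_induction with
  | mem w hw =>
    obtain ⟨p, hp, q, hq, rfl⟩ := hw
    obtain ⟨a, ha, rfl⟩ := Subgroup.mem_map.mp hp
    obtain ⟨g, rfl⟩ := hq
    refine ⟨⁅a, g⁆, ?_, kap a g, kap_mem a g, CC_decomp a g⟩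
    have hrep : ⁅a, g⁆ = a * (g * a⁻¹ * g⁻¹) := by
      simp only [commutatorElement_def]; group
    rw [hrep]; exact mul_mem ha (hA.conj_mem _ (A.inv_mem ha) g)
  | one => exact ⟨1, one_mem _, 1, one_mem _, by simp⟩
  | mul x y hx hy ihx ihy =>
    obtain ⟨k, hk, κ, hκ, rfl⟩ := ihx
    obtain ⟨k', hk', κ', hκ', rfl⟩ := ihy
    refine ⟨k * k', mul_mem hk hk', cj ((chiL G k')⁻¹) κ * κ',
      mul_mem (memK_cj _ hκ) hκ', ?_⟩
    simp only [cj, map_mul]; group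
  | inv x hx ihx =>
    obtain ⟨k, hk, κ, hκ, rfl⟩ := ihx
    refine ⟨k⁻¹, inv_mem hk, cj (chiL G k) κ⁻¹, memK_cj _ (inv_mem hκ), ?_⟩
    simp only [cj, map_inv]; group

lemma TcommK (hA : A.Normal) (hAab : ∀ a ∈ A, ∀ b ∈ A, a * b = b * a) :
    ∀ x ∈ ⁅A.map (chiL G), (chiR G).range⁆, ∀ y ∈ ⁅A.map (chiL G), (chiR G).range⁆,
      ⁅x, y⁆ ∈ KK G := by
  intro x hx y hy
  obtain ⟨k, hk, κ, hκ, hxeq⟩ := Tstruct hA x hx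
  obtain ⟨k', hk', κ', hκ', hyeq⟩ := Tstruct hA y hy
  have hyD : y ∈ DD G := T_le_D A hy
  have h1 : ⁅x, y⁆ = ⁅chiL G k, y⁆ := by
    rw [hxeq, comm_mul_left, commutatorElement_eq_one_iff_commute.mpr (commK hκ hyD),
      cj_id, one_mul]
  have h2 : ⁅chiL G k, y⁆ = cj (chiL G k') ⁅chiL G k, κ'⁆ := by
    rw [hyeq, comm_mul_right, ← map_commutatorElement,
      commutatorElement_eq_one_iff_commute.mpr (hAab k hk k' hk'), map_one, one_mul]
  rw [h1, h2, comm_as_cj]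
  exact memK_cj _ (mul_mem (memK_cj _ hκ') (inv_mem hκ'))

lemma TpowK (hA : A.Normal) {e : ℕ} (hApow : ∀ k ∈ A, k ^ e = 1) :
    ∀ x ∈ ⁅A.map (chiL G), (chiR G).range⁆, x ^ e ∈ KK G := by
  intro x hx
  obtain ⟨k, hk, κ, hκ, rfl⟩ := Tstruct hA x hx
  have key : ∀ n : ℕ, ∃ κn ∈ KK G, (chiL G k * κ) ^ n = chiL G (k ^ n) * κn := by
    intro n
    induction n with
    | zero => exact ⟨1, one_mem _, by simp⟩
    | succ n ih =>
      obtain ⟨κn, hκn, hn⟩ := ih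
      refine ⟨cj ((chiL G k)⁻¹) κn * κ, mul_mem (memK_cj _ hκn) hκ, ?_⟩
      rw [pow_succ, hn, pow_succ]
      simp only [cj, map_mul]; group
  obtain ⟨κe, hκe, he⟩ := key e
  rw [he, hApow k hk, map_one, one_mul]
  exact hκe

lemma comm_pow_left {x y : chi G} (h : Commute x ⁅x, y⁆) (n : ℕ) :
    ⁅x ^ n, y⁆ = ⁅x, y⁆ ^ n := by
  induction n with
  | zero => simp only [pow_zero, commutatorElement_def]; group
  | succ n ih =>
    rw [pow_succ', comm_mul_left, ih, cj_eq_self_of_commute (h.pow_right n), ← pow_succ]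

lemma zetaE (hA : A.Normal) (hAab : ∀ a ∈ A, ∀ b ∈ A, a * b = b * a)
    {e : ℕ} (hApow : ∀ k ∈ A, k ^ e = 1) :
    ∀ x ∈ ⁅A.map (chiL G), (chiR G).range⁆, ∀ y ∈ ⁅A.map (chiL G), (chiR G).range⁆,
      ⁅x, y⁆ ^ e = 1 := by
  intro x hx y hy
  have hζK := TcommK hA hAab x hx y hy
  have hxζ : Commute x ⁅x, y⁆ := (commK hζK (T_le_D A hx)).symm
  rw [← comm_pow_left hxζ e]
  exact commutatorElement_eq_one_iff_commute.mpr (commK (TpowK hA hApow x hx) (T_le_D A hy))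

end Tpart

section P1
variable {A : Subgroup G}

lemma W1 (p q w : G) (hpq : p * q = q * p) :
    cj (chiL G p) (CC q w) * CC p w = cj (chiL G q) (CC p w) * CC q w := by
  rw [← CCexp1, ← CCexp1, hpq]

lemma Wa (p q : G) (hpq : p * q = q * p) : Commute (chiL G q) (CC p q) := by
  have h := W1 p q q hpq
  rw [CC_self, cj_id, one_mul, mul_one] at h
  exact commute_of_cj_eq_self h.symm

lemma CC_pow_self (q : G) (j : ℕ) : CC q (q ^ j) = 1 := by
  rw [CC, map_pow]
  exact commutatorElement_eq_one_iff_commute.mpr ((rel q).pow_right j)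

lemma We (p q : G) (hpq : p * q = q * p) (j : ℕ) :
    Commute (chiL G q) (CC p (q ^ j)) := by
  have h := W1 p q (q ^ j) hpq
  rw [CC_pow_self, cj_id, one_mul, mul_one] at h
  exact commute_of_cj_eq_self h.symm

lemma Wer (p q : G) (hpq : p * q = q * p) (j : ℕ) :
    Commute (chiR G q) (CC p (q ^ j)) := by
  have h1 := We p q hpq j
  have h2 : Commute (dd q) (CC p (q ^ j)) := (commute_dd_of_memD (memD_CC _ _) q).symm
  have h3 : chiR G q = chiL G q * dd q := by simp only [dd]; group
  rw [h3]
  exact h1.mul_left h2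

lemma CC_pow_right (p q : G) (hpq : p * q = q * p) (j : ℕ) :
    CC p (q ^ j) = (CC p q) ^ j := by
  induction j with
  | zero => rw [pow_zero, CC_one_right, pow_zero]
  | succ j ih =>
    rw [pow_succ', CCexp2, cj_eq_self_of_commute (Wer p q hpq j), ih, ← pow_succ']

lemma gen_pow (hA : A.Normal) (hAab : ∀ a ∈ A, ∀ b ∈ A, a * b = b * a)
    {e : ℕ} (hApow : ∀ k ∈ A, k ^ e = 1) {a : G} (ha : a ∈ A) (g : G) :
    (CC a g) ^ (2 * e) = 1 := by
  have hyA : g⁻¹ * a * g ∈ A := by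
    have := hA.conj_mem a ha g⁻¹
    simpa using this
  set y : G := g⁻¹ * a * g with hy
  have hay : a * y = y * a := hAab a ha y hyA
  have hβK : CC a y ∈ KK G := by
    have h1 : (⁅a, y⁆ : G) = 1 := commutatorElement_eq_one_iff_commute.mpr hay
    rw [CC_decomp, h1, map_one, one_mul]
    exact kap_mem a y
  have hβtr : cj (chiR G g) (CC a y) = cj (chiL G g) (CC a y) :=
    (transport g (commute_dd_of_memD (memD_CC a y) g)).symm
  have hzK : cj (chiR G g) (CC a y) ∈ KK G := memK_cj _ hβK
  have hzc : Commute (cj (chiR G g) (CC a y)) (CC a g) := commK hzK (memD_CC a g)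
  have hzla : Commute (chiL G a) (cj (chiR G g) (CC a y)) := by
    apply commute_of_cj_eq_self
    have hag : a * g = g * y := by rw [hy]; group
    calc cj (chiL G a) (cj (chiR G g) (CC a y))
        = cj (chiL G a) (cj (chiL G g) (CC a y)) := by rw [hβtr]
      _ = cj (chiL G (a * g)) (CC a y) := by rw [cj_cj, ← map_mul]
      _ = cj (chiL G (g * y)) (CC a y) := by rw [hag]
      _ = cj (chiL G g) (cj (chiL G y) (CC a y)) := by rw [map_mul, cj_cj]
      _ = cj (chiL G g) (CC a y) := by rw [cj_eq_self_of_commute (Wa a y hay)]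
      _ = cj (chiR G g) (CC a y) := hβtr.symm
  have hcla : cj (chiL G a) (CC a g) = CC a g * cj (chiR G g) (CC a y) := by
    have h1 : cj (chiL G a) (CC a g) = cj (chiR G a) (CC a g) :=
      transport a (commute_dd_of_memD (memD_CC a g) a)
    have h2 : cj (chiR G a) (CC a g) = ⁅chiL G a, chiR G (a * g * a⁻¹)⁆ := by
      rw [CC, cj_comm, cj_eq_self_of_commute (rel a).symm]
      congr 1
      simp only [cj, map_mul, map_inv]
    have h3 : a * g * a⁻¹ = g * (y * a⁻¹) := by rw [hy]; group
    have h4 : CC a (y * a⁻¹) = CC a y := by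
      have h5 : CC a a⁻¹ = 1 := by
        rw [CC, map_inv]
        exact commutatorElement_eq_one_iff_commute.mpr (rel a).inv_right
      rw [CCexp2, h5, cj_id, mul_one]
    have h6 : (⁅chiL G a, chiR G (g * (y * a⁻¹))⁆ : chi G) = CC a (g * (y * a⁻¹)) := rfl
    rw [h1, h2, h3, h6, CCexp2, h4]
  -- main telescope
  have main : ∀ n : ℕ, ⁅(chiL G a) ^ n, chiR G g⁆
      = (CC a g) ^ n * (cj (chiR G g) (CC a y)) ^ (n.choose 2) := by
    intro n
    induction n with
    | zero => simp only [pow_zero, Nat.choose, commutatorElement_def]; group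
    | succ n ih =>
      have hstep : ⁅(chiL G a) ^ (n + 1), chiR G g⁆
          = cj (chiL G a) ⁅(chiL G a) ^ n, chiR G g⁆ * ⁅chiL G a, chiR G g⁆ := by
        rw [pow_succ', comm_mul_left]
      have hcomm : (⁅chiL G a, chiR G g⁆ : chi G) = CC a g := rfl
      rw [hstep, ih, cj_mul, cj_pow, cj_pow, hcla, cj_eq_self_of_commute hzla,
        (hzc.symm).mul_pow, hcomm]
      have harr : (CC a g) ^ n * (cj (chiR G g) (CC a y)) ^ n
            * (cj (chiR G g) (CC a y)) ^ (n.choose 2) * CC a g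
          = (CC a g) ^ (n + 1)
            * ((cj (chiR G g) (CC a y)) ^ n * (cj (chiR G g) (CC a y)) ^ (n.choose 2)) := by
        calc (CC a g) ^ n * (cj (chiR G g) (CC a y)) ^ n
              * (cj (chiR G g) (CC a y)) ^ (n.choose 2) * CC a g
            = (CC a g) ^ n * ((cj (chiR G g) (CC a y)) ^ (n + n.choose 2) * CC a g) := by
              rw [pow_add]; group
          _ = (CC a g) ^ n * (CC a g * (cj (chiR G g) (CC a y)) ^ (n + n.choose 2)) := by
              rw [(hzc.pow_left (n + n.choose 2)).eq]
          _ = (CC a g) ^ (n + 1)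
              * ((cj (chiR G g) (CC a y)) ^ n * (cj (chiR G g) (CC a y)) ^ (n.choose 2)) := by
              rw [pow_add, pow_succ]; group
      rw [harr, ← pow_add]
      congr 2
      rw [Nat.choose_succ_succ n 1, Nat.choose_one_right, Nat.add_comm]
  have he1 : (chiL G a) ^ e = 1 := by rw [← map_pow, hApow a ha, map_one]
  have he2 : (CC a g) ^ e * (cj (chiR G g) (CC a y)) ^ (e.choose 2) = 1 := by
    rw [← main e, he1]
    simp only [commutatorElement_def]; group
  have hze : (cj (chiR G g) (CC a y)) ^ e = 1 := by
    have hy_pow : y ^ e = 1 := by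
      have hconj : ∀ n : ℕ, y ^ n = g⁻¹ * a ^ n * g := by
        intro n
        induction n with
        | zero => simp
        | succ n ih => rw [pow_succ, ih, hy, pow_succ]; group
      rw [hconj e, hApow a ha]; group
    rw [← cj_pow, ← CC_pow_right a y hay, hy_pow, CC_one_right, cj_id]
  have hce : (CC a g) ^ e = ((cj (chiR G g) (CC a y)) ^ (e.choose 2))⁻¹ := by
    rw [eq_inv_iff_mul_eq_one]; exact he2
  have harith : 2 * e.choose 2 = e * (e - 1) := by
    have hdvd : 2 ∣ e * (e - 1) := by
      rcases e with _ | m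
      · simp
      · simpa [Nat.mul_comm] using (Nat.even_mul_succ_self m).two_dvd
    rw [Nat.choose_two_right, Nat.mul_div_cancel' hdvd]
  calc (CC a g) ^ (2 * e) = ((CC a g) ^ e) ^ 2 := by rw [← pow_mul, Nat.mul_comm]
    _ = (((cj (chiR G g) (CC a y)) ^ e.choose 2) ^ 2)⁻¹ := by rw [hce, inv_pow]
    _ = ((cj (chiR G g) (CC a y)) ^ (2 * e.choose 2))⁻¹ := by rw [← pow_mul, Nat.mul_comm]
    _ = (((cj (chiR G g) (CC a y)) ^ e) ^ (e - 1))⁻¹ := by rw [harith, pow_mul]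
    _ = 1 := by rw [hze, one_pow, inv_one]

end P1

/-- class-2 power collection -/
lemma pow_shift {x y z : chi G} (hyx : y * x = z * (x * y)) (hzy : Commute z y) (n : ℕ) :
    y ^ n * x = z ^ n * (x * y ^ n) := by
  induction n with
  | zero => simp
  | succ n ih =>
    calc y ^ (n + 1) * x = y * (y ^ n * x) := by rw [pow_succ']; group
      _ = y * (z ^ n * (x * y ^ n)) := by rw [ih]
      _ = (y * z ^ n) * (x * y ^ n) := by group
      _ = (z ^ n * y) * (x * y ^ n) := by rw [(hzy.pow_left n).eq]
      _ = z ^ n * ((y * x) * y ^ n) := by group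
      _ = z ^ n * ((z * (x * y)) * y ^ n) := by rw [hyx]
      _ = z ^ (n + 1) * (x * y ^ (n + 1)) := by rw [pow_succ, pow_succ']; group

lemma central_mul_pow {x y z : chi G} (hyx : y * x = z * (x * y))
    (hzx : Commute z x) (hzy : Commute z y) (n : ℕ) :
    (x * y) ^ n = z ^ (n.choose 2) * (x ^ n * y ^ n) := by
  induction n with
  | zero => simp [Nat.choose]
  | succ n ih =>
    calc (x * y) ^ (n + 1) = (x * y) ^ n * (x * y) := by rw [pow_succ]
      _ = z ^ (n.choose 2) * (x ^ n * (y ^ n * x) * y) := by rw [ih]; group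
      _ = z ^ (n.choose 2) * (x ^ n * (z ^ n * (x * y ^ n)) * y) := by
          rw [pow_shift hyx hzy n]
      _ = z ^ (n.choose 2) * ((x ^ n * z ^ n) * (x * y ^ n) * y) := by group
      _ = z ^ (n.choose 2) * ((z ^ n * x ^ n) * (x * y ^ n) * y) := by
          rw [(hzx.pow_pow n n).symm.eq]
      _ = z ^ (n.choose 2) * z ^ n * (x ^ (n + 1) * y ^ (n + 1)) := by
          rw [pow_succ, pow_succ]; group
      _ = z ^ ((n + 1).choose 2) * (x ^ (n + 1) * y ^ (n + 1)) := by
          rw [← pow_add]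
          congr 2
          rw [Nat.choose_succ_succ n 1, Nat.choose_one_right, Nat.add_comm]

end Chi9

/-- If A is an abelian normal subgroup of a finite group G with exp(A) even,
then exp([A, G^φ]) divides 2·exp(A). -/
theorem stmt_9 {G : Type*} [Group G] [Finite G] (A : Subgroup G)
    (hA : A.Normal) (hAab : ∀ a ∈ A, ∀ b ∈ A, a * b = b * a)
    (heven : Even (Monoid.exponent A)) :
    Monoid.exponent ↥(⁅A.map (chiL G), (chiR G).range⁆ : Subgroup (chi G)) ∣
      2 * Monoid.exponent A := by
  classical
  set e : ℕ := Monoid.exponent ↥A with he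
  have hApow : ∀ k ∈ A, k ^ e = 1 := by
    intro k hk
    have h := Monoid.pow_exponent_eq_one (⟨k, hk⟩ : ↥A)
    have h2 := congrArg (Subtype.val) h
    simpa using h2
  have main : ∀ t ∈ (⁅A.map (chiL G), (chiR G).range⁆ : Subgroup (chi G)),
      t ^ (2 * e) = 1 := by
    have hTdef : (⁅A.map (chiL G), (chiR G).range⁆ : Subgroup (chi G))
        = Subgroup.closure {x | ∃ p ∈ A.map (chiL G), ∃ q ∈ (chiR G).range, ⁅p, q⁆ = x} :=
      Subgroup.commutator_def _ _
    intro t ht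
    rw [hTdef] at ht
    induction ht using Subgroup.closure_induction with
    | mem w hw =>
      obtain ⟨p, hp, q, hq, rfl⟩ := hw
      obtain ⟨a, ha, rfl⟩ := Subgroup.mem_map.mp hp
      obtain ⟨g, rfl⟩ := hq
      exact Chi9.gen_pow hA hAab hApow ha g
    | one => exact one_pow _
    | mul x y hx hy ihx ihy =>
      have hxT : x ∈ (⁅A.map (chiL G), (chiR G).range⁆ : Subgroup (chi G)) := by
        rw [hTdef]; exact hx
      have hyT : y ∈ (⁅A.map (chiL G), (chiR G).range⁆ : Subgroup (chi G)) := by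
        rw [hTdef]; exact hy
      have hyx : y * x = ⁅y, x⁆ * (x * y) := by
        simp only [commutatorElement_def]; group
      have hζK := Chi9.TcommK hA hAab y hyT x hxT
      have hzx : Commute (⁅y, x⁆ : chi G) x := Chi9.commK hζK (Chi9.T_le_D A hxT)
      have hzy : Commute (⁅y, x⁆ : chi G) y := Chi9.commK hζK (Chi9.T_le_D A hyT)
      have hζe : (⁅y, x⁆ : chi G) ^ e = 1 := Chi9.zetaE hA hAab hApow y hyT x hxT
      rw [Chi9.central_mul_pow hyx hzx hzy (2 * e), ihx, ihy, mul_one, mul_one]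
      have harith : (2 * e).choose 2 = e * (2 * e - 1) := by
        rw [Nat.choose_two_right]
        have : 2 * e * (2 * e - 1) = 2 * (e * (2 * e - 1)) := by ring
        rw [this, Nat.mul_div_cancel_left _ (by norm_num)]
      rw [harith, pow_mul, hζe, one_pow]
    | inv x hx ihx => rw [inv_pow, ihx, inv_one]
  apply Monoid.exponent_dvd_of_forall_pow_eq_one
  intro t
  apply Subtype.ext
  rw [SubgroupClass.coe_pow, OneMemClass.coe_one]
  exact main ↑t t.2
end

section
/- Let p be an odd prime and G a finite p-group of derived length d. Then exp(M(G)) divides exp(G)^d, where M(G) is the Schur multiplier of G. -/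
/-- The Schur multiplier of `G`, via Hopf's formula: for the free presentation
`1 → R → F → G → 1` with `F` the free group on `G` and `R = ker(F →* G)`,
`M(G) = (R ⊓ [F,F]) / [F,R]`. -/
def schurMultiplier (G : Type*) [Group G] : Type _ :=
  ↥((FreeGroup.lift (id : G → G)).ker ⊓ commutator (FreeGroup G)) ⧸
    (⁅(⊤ : Subgroup (FreeGroup G)), (FreeGroup.lift (id : G → G)).ker⁆.subgroupOf
      ((FreeGroup.lift (id : G → G)).ker ⊓ commutator (FreeGroup G)))

instance (G : Type*) [Group G] : Group (schurMultiplier G) :=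
  QuotientGroup.Quotient.group _

open scoped commutatorElement

section Aux

variable {H : Type*} [Group H]

private lemma swp {c : H} (hc : ∀ a : H, Commute c a) (j : ℕ) (a : H) :
    a * c ^ j = c ^ j * a := ((hc a).pow_left j).symm.eq
private lemma swp' {c : H} (hc : ∀ a : H, Commute c a) (j : ℕ) (a b : H) :
    a * (c ^ j * b) = c ^ j * (a * b) := by
  rw [← mul_assoc, swp hc, mul_assoc]

private lemma aux_pow_comm {c x y : H} (hc : ∀ a : H, Commute c a) (h : y * x = c * (x * y)) :
    ∀ k : ℕ, y ^ k * x = c ^ k * (x * y ^ k)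
  | 0 => by simp
  | k + 1 => by
    have ih := aux_pow_comm hc h k
    calc y ^ (k + 1) * x = y * (y ^ k * x) := by rw [pow_succ', mul_assoc]
      _ = y * (c ^ k * (x * y ^ k)) := by rw [ih]
      _ = c ^ k * (y * x * y ^ k) := by rw [swp' hc]; simp only [mul_assoc]
      _ = c ^ k * (c * (x * y) * y ^ k) := by rw [h]
      _ = c ^ (k + 1) * (x * y ^ (k + 1)) := by
          rw [pow_succ c, pow_succ' y]; simp only [mul_assoc]

private lemma aux_mul_pow {c x y : H} (hc : ∀ a : H, Commute c a) (h : y * x = c * (x * y)) :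
    ∀ k : ℕ, (x * y) ^ k = x ^ k * y ^ k * c ^ (k.choose 2)
  | 0 => by simp
  | k + 1 => by
    have ih := aux_mul_pow hc h k
    have hch : (k + 1).choose 2 = k.choose 2 + k := by
      rw [Nat.choose_succ_succ, Nat.choose_one_right, Nat.add_comm]
    have hb : ∀ u : H, c ^ (k.choose 2) * c ^ k * u = u * (c ^ (k.choose 2) * c ^ k) :=
      fun u => (((hc u).pow_left (k.choose 2)).mul_left ((hc u).pow_left k)).eq
    calc (x * y) ^ (k + 1) = (x * y) ^ k * (x * y) := pow_succ _ _
      _ = x ^ k * y ^ k * c ^ (k.choose 2) * (x * y) := by rw [ih]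
      _ = c ^ (k.choose 2) * (x ^ k * (y ^ k * x) * y) := by
          simp only [mul_assoc, swp' hc, swp hc]
      _ = c ^ (k.choose 2) * (x ^ k * (c ^ k * (x * y ^ k)) * y) := by
          rw [aux_pow_comm hc h k]
      _ = x ^ (k + 1) * y ^ (k + 1) * c ^ ((k + 1).choose 2) := by
          rw [hch, pow_add c (k.choose 2) k, pow_succ x k, pow_succ y k, ← hb]
          rw [swp' hc k (x ^ k) (x * y ^ k)]
          simp only [mul_assoc]

private lemma aux_commutator_pow_right {x y : H}
    (hcen : ∀ j : ℕ, Commute ⁅x, y ^ j⁆ y) : ∀ k : ℕ, ⁅x, y ^ k⁆ = ⁅x, y⁆ ^ k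
  | 0 => by simp
  | k + 1 => by
    have hsplit : ⁅x, y * y ^ k⁆ = ⁅x, y⁆ * (y * ⁅x, y ^ k⁆ * y⁻¹) := by
      simp only [commutatorElement_def]
      group
    have hconj : y * ⁅x, y ^ k⁆ * y⁻¹ = ⁅x, y ^ k⁆ := by
      rw [(hcen k).symm.eq, mul_assoc, mul_inv_cancel, mul_one]
    calc ⁅x, y ^ (k + 1)⁆ = ⁅x, y * y ^ k⁆ := by rw [pow_succ']
      _ = ⁅x, y⁆ * (y * ⁅x, y ^ k⁆ * y⁻¹) := hsplit
      _ = ⁅x, y⁆ * ⁅x, y ^ k⁆ := by rw [hconj]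
      _ = ⁅x, y⁆ * ⁅x, y⁆ ^ k := by rw [aux_commutator_pow_right hcen k]
      _ = ⁅x, y⁆ ^ (k + 1) := by rw [pow_succ']

private lemma aux_commutator_pow_expand {h w : H}
    (hz : ∀ a : H, Commute ⁅w, ⁅h, w⁆⁆ a) :
    ∀ k : ℕ, ⁅h, w ^ k⁆ = ⁅h, w⁆ ^ k * ⁅w, ⁅h, w⁆⁆ ^ (k.choose 2)
  | 0 => by simp
  | k + 1 => by
    have ih := aux_commutator_pow_expand hz k
    have hch : (k + 1).choose 2 = k + k.choose 2 := by
      rw [Nat.choose_succ_succ, Nat.choose_one_right]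
    have hsplit : ⁅h, w * w ^ k⁆ = ⁅h, w⁆ * (w * ⁅h, w ^ k⁆ * w⁻¹) := by
      simp only [commutatorElement_def]
      group
    have hwt : w * ⁅h, w⁆ * w⁻¹ = ⁅w, ⁅h, w⁆⁆ * ⁅h, w⁆ := by
      simp only [commutatorElement_def]
      group
    have hconj : w * ⁅h, w⁆ ^ k * w⁻¹ = ⁅w, ⁅h, w⁆⁆ ^ k * ⁅h, w⁆ ^ k := by
      rw [← conj_pow, hwt, (hz ⁅h, w⁆).mul_pow]
    have hb : ∀ u : H, ⁅w, ⁅h, w⁆⁆ ^ k * ⁅w, ⁅h, w⁆⁆ ^ (k.choose 2) * u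
        = u * (⁅w, ⁅h, w⁆⁆ ^ k * ⁅w, ⁅h, w⁆⁆ ^ (k.choose 2)) :=
      fun u => (((hz u).pow_left k).mul_left ((hz u).pow_left (k.choose 2))).eq
    calc ⁅h, w ^ (k + 1)⁆ = ⁅h, w * w ^ k⁆ := by rw [pow_succ']
      _ = ⁅h, w⁆ * (w * ⁅h, w ^ k⁆ * w⁻¹) := hsplit
      _ = ⁅h, w⁆ * (w * (⁅h, w⁆ ^ k * ⁅w, ⁅h, w⁆⁆ ^ (k.choose 2)) * w⁻¹) := by rw [ih]
      _ = ⁅h, w⁆ * ((w * ⁅h, w⁆ ^ k * w⁻¹) * ⁅w, ⁅h, w⁆⁆ ^ (k.choose 2)) := by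
          simp only [mul_assoc, swp' hz, swp hz]
      _ = ⁅h, w⁆ * (⁅w, ⁅h, w⁆⁆ ^ k * ⁅h, w⁆ ^ k * ⁅w, ⁅h, w⁆⁆ ^ (k.choose 2)) := by
          rw [hconj]
      _ = ⁅h, w⁆ ^ (k + 1) * ⁅w, ⁅h, w⁆⁆ ^ ((k + 1).choose 2) := by
          rw [hch, pow_add ⁅w, ⁅h, w⁆⁆ k (k.choose 2), pow_succ' ⁅h, w⁆ k, ← hb]
          rw [mul_assoc, swp hz, swp' hz k ⁅h, w⁆, swp' hz (k.choose 2) ⁅h, w⁆]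
          simp only [mul_assoc]

/-- For odd `n`, `n.choose 2` is a multiple of `n`. -/
private lemma aux_choose_two {n m : ℕ} (hm : n = 2 * m + 1) : n.choose 2 = n * m := by
  rw [Nat.choose_two_right]
  have h1 : n - 1 = 2 * m := by omega
  rw [h1, show n * (2 * m) = 2 * (n * m) by ring, Nat.mul_div_cancel_left _ (by norm_num)]

/-- Key lemma: if `W` is a normal subgroup of `H` with `⁅W, W⁆ ≤ Z ≤ Z(H)`,
all `n`-th powers lie in `Z`, and `n` is odd, then `⁅⊤, W⁆` has exponent dividing `n`. -/
private lemma key1 {n : ℕ} (hodd : Odd n) (Z W : Subgroup H) [W.Normal]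
    (hZ : Z ≤ Subgroup.center H) (hWW : ⁅W, W⁆ ≤ Z) (hn : ∀ h : H, h ^ n ∈ Z) :
    ∀ x ∈ ⁅(⊤ : Subgroup H), W⁆, x ^ n = 1 := by
  obtain ⟨m, hm⟩ := hodd
  have hm' : n = 2 * m + 1 := by omega
  have hnm : n.choose 2 = n * m := aux_choose_two hm'
  -- elements of Z commute with everything
  have hcen : ∀ z ∈ Z, ∀ a : H, Commute z a := by
    intro z hz a
    have := Subgroup.mem_center_iff.mp (hZ hz) a
    exact (Commute.symm (this : Commute a z))
  -- commutators of elements of W are killed by n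
  have hC : ∀ x ∈ W, ∀ y ∈ W, ⁅x, y⁆ ^ n = 1 := by
    intro x hx y hy
    have hcen' : ∀ j : ℕ, Commute ⁅x, y ^ j⁆ y := fun j =>
      hcen _ (hWW (Subgroup.commutator_mem_commutator hx (pow_mem hy j))) y
    have h1 : ⁅x, y ^ n⁆ = ⁅x, y⁆ ^ n := aux_commutator_pow_right hcen' n
    have h2 : ⁅x, y ^ n⁆ = 1 :=
      commutatorElement_eq_one_iff_commute.mpr ((hcen _ (hn y) x).symm)
    rw [← h1, h2]
  -- generators of ⁅⊤, W⁆ are killed by n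
  have hA : ∀ (h : H), ∀ w ∈ W, ⁅h, w⁆ ^ n = 1 := by
    intro h w hw
    have htW : ⁅h, w⁆ ∈ W := by
      rw [commutatorElement_def]
      exact mul_mem (Subgroup.Normal.conj_mem ‹W.Normal› w hw h) (inv_mem hw)
    have hzZ : ⁅w, ⁅h, w⁆⁆ ∈ Z := hWW (Subgroup.commutator_mem_commutator hw htW)
    have hzc : ∀ a : H, Commute ⁅w, ⁅h, w⁆⁆ a := hcen _ hzZ
    have hexp : ⁅h, w ^ n⁆ = ⁅h, w⁆ ^ n * ⁅w, ⁅h, w⁆⁆ ^ (n.choose 2) :=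
      aux_commutator_pow_expand hzc n
    have h2 : ⁅h, w ^ n⁆ = 1 :=
      commutatorElement_eq_one_iff_commute.mpr ((hcen _ (hn w) h).symm)
    have h3 : ⁅w, ⁅h, w⁆⁆ ^ (n.choose 2) = 1 := by
      rw [hnm, pow_mul, hC w hw _ htW, one_pow]
    rw [h2, h3, mul_one] at hexp
    exact hexp.symm
  -- now closure induction
  intro x hx
  rw [Subgroup.commutator_def] at hx
  have main : x ∈ W ∧ x ^ n = 1 := by
    refine Subgroup.closure_induction
      (p := fun g _ => g ∈ W ∧ g ^ n = 1) ?_ ?_ ?_ ?_ hx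
    · rintro g ⟨g₁, -, g₂, hg₂, rfl⟩
      refine ⟨?_, hA g₁ g₂ hg₂⟩
      rw [commutatorElement_def]
      exact mul_mem (Subgroup.Normal.conj_mem ‹W.Normal› g₂ hg₂ g₁) (inv_mem hg₂)
    · exact ⟨one_mem W, one_pow n⟩
    · rintro a b _ _ ⟨haW, han⟩ ⟨hbW, hbn⟩
      refine ⟨mul_mem haW hbW, ?_⟩
      have hcZ : ⁅b, a⁆ ∈ Z := hWW (Subgroup.commutator_mem_commutator hbW haW)
      have hcc : ∀ u : H, Commute ⁅b, a⁆ u := hcen _ hcZ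
      have hba : b * a = ⁅b, a⁆ * (a * b) := by
        simp only [commutatorElement_def]
        group
      rw [aux_mul_pow hcc hba n, han, hbn, one_mul, one_mul, hnm, pow_mul,
        hC b hbW a haW, one_pow]
    · rintro a _ ⟨haW, han⟩
      exact ⟨inv_mem haW, by rw [inv_pow, han, inv_one]⟩
  exact main.2

/-- Main induction: if `Z ≤ Z(H)`, all `n`-th powers lie in `Z`, `n` odd, and the `d`-th
derived subgroup of `H` lies in `Z`, then every element of `[H,H]` is killed by `n ^ d`. -/
private lemma key2 {n : ℕ} (hodd : Odd n) : ∀ (d : ℕ) (H : Type*) [Group H]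
    (Z : Subgroup H), Z ≤ Subgroup.center H → (∀ h : H, h ^ n ∈ Z) →
    derivedSeries H d ≤ Z → ∀ x ∈ commutator H, x ^ n ^ d = 1 := by
  intro d
  induction d with
  | zero =>
    intro H _ Z hZ _ hder x hx
    have habel : commutator H = ⊥ := by
      rw [commutator_def, Subgroup.commutator_eq_bot_iff_le_centralizer]
      intro g _
      rw [Subgroup.mem_centralizer_iff]
      intro h _
      have hg : g ∈ Subgroup.center H := hZ (hder (by rw [derivedSeries_zero]; trivial))
      exact (Subgroup.mem_center_iff.mp hg h)
    rw [habel] at hx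
    simpa using Subgroup.mem_bot.mp hx
  | succ d ih =>
    intro H _ Z hZ hn hder x hx
    set W : Subgroup H := derivedSeries H d with hWdef
    haveI hWn : W.Normal := by rw [hWdef]; exact derivedSeries_normal _ _
    have hWW : ⁅W, W⁆ ≤ Z := by
      rw [hWdef, ← derivedSeries_succ]
      exact hder
    set D : Subgroup H := ⁅(⊤ : Subgroup H), W⁆ with hDdef
    haveI hDnormal : D.Normal := by rw [hDdef]; exact Subgroup.commutator_normal ⊤ W
    let π : H →* H ⧸ D := QuotientGroup.mk' D
    have hπs : Function.Surjective π := QuotientGroup.mk'_surjective D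
    set Z' : Subgroup (H ⧸ D) := Z.map π ⊔ W.map π with hZ'def
    have hZ'cen : Z' ≤ Subgroup.center (H ⧸ D) := by
      rw [hZ'def]
      refine sup_le ?_ ?_
      · rintro ζ ⟨z, hz, rfl⟩
        rw [Subgroup.mem_center_iff]
        intro g
        obtain ⟨a, rfl⟩ := hπs g
        rw [← map_mul, ← map_mul, Subgroup.mem_center_iff.mp (hZ hz) a]
      · rintro ζ ⟨w, hw, rfl⟩
        rw [Subgroup.mem_center_iff]
        intro g
        obtain ⟨a, rfl⟩ := hπs g
        have hmem : ⁅a, w⁆ ∈ D := by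
          rw [hDdef]
          exact Subgroup.commutator_mem_commutator (Subgroup.mem_top a) hw
        have h1 : π ⁅a, w⁆ = 1 := by
          rw [← MonoidHom.mem_ker, QuotientGroup.ker_mk']
          exact hmem
        rw [map_commutatorElement] at h1
        exact (commutatorElement_eq_one_iff_commute.mp h1).eq
    have hn' : ∀ h : H ⧸ D, h ^ n ∈ Z' := by
      intro h
      obtain ⟨a, rfl⟩ := hπs h
      rw [← map_pow]
      exact le_sup_left (α := Subgroup (H ⧸ D)) (Subgroup.mem_map_of_mem π (hn a))
    have hder' : derivedSeries (H ⧸ D) d ≤ Z' := by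
      rw [← map_derivedSeries_eq hπs d]
      calc (derivedSeries H d).map π = W.map π := by rw [hWdef]
        _ ≤ Z' := le_sup_right
    have hcx : π x ∈ commutator (H ⧸ D) := by
      have h1 : π x ∈ (commutator H).map π := Subgroup.mem_map_of_mem π hx
      have h2 : (commutator H).map π ≤ commutator (H ⧸ D) := by
        rw [commutator_def, Subgroup.map_commutator, commutator_def]
        exact Subgroup.commutator_mono le_top le_top
      exact h2 h1
    have hpix : (π x) ^ n ^ d = 1 := ih (H ⧸ D) Z' hZ'cen hn' hder' (π x) hcx
    have hxD : x ^ n ^ d ∈ D := by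
      rw [← QuotientGroup.ker_mk' D, MonoidHom.mem_ker, map_pow]
      exact hpix
    have hfin : (x ^ n ^ d) ^ n = 1 := key1 hodd Z W hZ hWW hn _ hxD
    rw [pow_succ, pow_mul]
    exact hfin

end Aux

/-- If p is an odd prime and G is a finite p-group of derived length d, then
exp(M(G)) divides exp(G)^d. -/
theorem stmt_19 {G : Type*} [Group G] [Finite G] (p : ℕ) (hp : p.Prime)
    (hpodd : Odd p) (hpG : IsPGroup p G)
    (d : ℕ) (hd : derivedSeries G d = ⊥)
    (hmin : ∀ k, derivedSeries G k = ⊥ → d ≤ k) :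
    Monoid.exponent (schurMultiplier G) ∣ Monoid.exponent G ^ d := by
  classical
  set φ : FreeGroup G →* G := FreeGroup.lift (id : G → G) with hφdef
  have hφs : Function.Surjective φ := fun g => ⟨FreeGroup.of g, by simp [hφdef]⟩
  set R : Subgroup (FreeGroup G) := φ.ker with hRdef
  set n : ℕ := Monoid.exponent G with hndef
  -- n is odd
  have hodd : Odd n := by
    have h1 : n ∣ Nat.card G := Group.exponent_dvd_nat_card
    haveI : Fact p.Prime := ⟨hp⟩
    obtain ⟨k, hk⟩ := IsPGroup.iff_card.mp hpG
    rw [hk] at h1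
    obtain ⟨j, -, hj⟩ := (Nat.dvd_prime_pow hp).mp h1
    rw [hj]
    exact hpodd.pow
  -- all n-th powers lie in R
  have hpow : ∀ f : FreeGroup G, f ^ n ∈ R := by
    intro f
    rw [hRdef, MonoidHom.mem_ker, map_pow, hndef, Monoid.pow_exponent_eq_one]
  -- derived series of the free group lands in R at stage d
  have hder : derivedSeries (FreeGroup G) d ≤ R := by
    intro f hf
    have h1 : φ f ∈ (derivedSeries (FreeGroup G) d).map φ := Subgroup.mem_map_of_mem φ hf
    have h2 : (derivedSeries (FreeGroup G) d).map φ ≤ derivedSeries G d :=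
      map_derivedSeries_le_derivedSeries φ d
    have h3 : φ f ∈ (⊥ : Subgroup G) := hd ▸ h2 h1
    rw [hRdef, MonoidHom.mem_ker]
    exact Subgroup.mem_bot.mp h3
  -- set up the quotient by D = [F, R]
  set D : Subgroup (FreeGroup G) := ⁅(⊤ : Subgroup (FreeGroup G)), R⁆ with hDdef
  haveI hDnormal : D.Normal := by rw [hDdef]; exact Subgroup.commutator_normal ⊤ R
  let π : FreeGroup G →* FreeGroup G ⧸ D := QuotientGroup.mk' D
  have hπs : Function.Surjective π := QuotientGroup.mk'_surjective D
  set Z : Subgroup (FreeGroup G ⧸ D) := R.map π with hZdef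
  have hZcen : Z ≤ Subgroup.center (FreeGroup G ⧸ D) := by
    rintro ζ ⟨r, hr, rfl⟩
    rw [Subgroup.mem_center_iff]
    intro g
    obtain ⟨a, rfl⟩ := hπs g
    have hmem : ⁅a, r⁆ ∈ D := by
      rw [hDdef]
      exact Subgroup.commutator_mem_commutator (Subgroup.mem_top a) hr
    have h1 : π ⁅a, r⁆ = 1 := by
      rw [← MonoidHom.mem_ker, QuotientGroup.ker_mk']
      exact hmem
    rw [map_commutatorElement] at h1
    exact (commutatorElement_eq_one_iff_commute.mp h1).eq
  have hn' : ∀ h : FreeGroup G ⧸ D, h ^ n ∈ Z := by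
    intro h
    obtain ⟨a, rfl⟩ := hπs h
    rw [← map_pow]
    exact Subgroup.mem_map_of_mem π (hpow a)
  have hder' : derivedSeries (FreeGroup G ⧸ D) d ≤ Z := by
    rw [← map_derivedSeries_eq hπs d]
    exact Subgroup.map_mono hder
  -- the key conclusion about elements of R ⊓ [F,F]
  have hkey : ∀ x : FreeGroup G, x ∈ commutator (FreeGroup G) → x ^ n ^ d ∈ D := by
    intro x hx
    have hcx : π x ∈ commutator (FreeGroup G ⧸ D) := by
      have h1 : π x ∈ (commutator (FreeGroup G)).map π := Subgroup.mem_map_of_mem π hx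
      have h2 : (commutator (FreeGroup G)).map π ≤ commutator (FreeGroup G ⧸ D) := by
        rw [commutator_def, Subgroup.map_commutator, commutator_def]
        exact Subgroup.commutator_mono le_top le_top
      exact h2 h1
    have hpix : (π x) ^ n ^ d = 1 :=
      key2 hodd d (FreeGroup G ⧸ D) Z hZcen hn' hder' (π x) hcx
    rw [← QuotientGroup.ker_mk' D, MonoidHom.mem_ker, map_pow]
    exact hpix
  -- conclude about the Schur multiplier
  have main : ∀ ξ : (↥(R ⊓ commutator (FreeGroup G)) ⧸
      (D.subgroupOf (R ⊓ commutator (FreeGroup G)))), ξ ^ n ^ d = 1 := by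
    intro ξ
    induction ξ using QuotientGroup.induction_on with
    | H x =>
      rw [← QuotientGroup.mk_pow, QuotientGroup.eq_one_iff, Subgroup.mem_subgroupOf]
      have hcoe : ((x ^ n ^ d : ↥(R ⊓ commutator (FreeGroup G))) : FreeGroup G)
          = (x : FreeGroup G) ^ n ^ d := by
        push_cast
        rfl
      rw [hcoe]
      exact hkey (x : FreeGroup G) x.2.2
  exact Monoid.exponent_dvd_of_forall_pow_eq_one main
end
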